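/- (PPP understates portfolio risk.) Under the hypotheses of the variance decomposition — $R$ a random vector in $\mathbb{R}^K$ with finite second moments and mean $\mu$, $\theta$ a random $K \times L$ matrix independent of $R$ with finite second moments, $w_b \in \mathbb{R}^K$, $z \in \mathbb{R}^L$, and $\operatorname{Cov}(\theta z) = (z^\top \Sigma z) I_K$ for a positive semidefinite $\Sigma$ — the total variance of the portfolio return $r_p = (w_b+\theta z)\cdot R$ satisfies $\operatorname{Var}(r_p) \geq \mathbb{E}_\theta[\operatorname{Var}(r_p \mid \theta)]$, with strict inequality if and only if $(z^\top \Sigma z)\|\mu\|^2 > 0$. -/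

import Mathlib

open Matrix MeasureTheory ProbabilityTheory Finset

section Aux

variable {Ω : Type*} [MeasurableSpace Ω] {μ : Measure Ω}

lemma l2_mul_integrable' {f g : Ω → ℝ} (hf : MemLp f 2 μ) (hg : MemLp g 2 μ) :
    Integrable (fun ω => f ω * g ω) μ := by
  have h : MemLp (f • g) 1 μ := hg.smul hf
  rw [memLp_one_iff_integrable] at h
  exact h

end Aux

/-- **PPP understates portfolio risk.** Under the hypotheses of the variance
decomposition, the total variance of the portfolio return `r_p = (w_b + θ *ᵥ z) ⬝ᵥ R` is at
least the expected conditional (market) variance `𝔼_θ[Var(r_p ∣ θ)]`, with strict inequality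
if and only if the estimation-risk term `(zᵀ Sig z) ‖μv‖²` is strictly positive. -/
theorem ppp_understates_risk
    {Ω : Type*} [MeasurableSpace Ω] (μ : Measure Ω) [IsProbabilityMeasure μ]
    {K L : ℕ} (R : Ω → Fin K → ℝ) (θ : Ω → Matrix (Fin K) (Fin L) ℝ)
    (hindep : IndepFun (fun ω => Matrix.of.symm (θ ω)) R μ)
    (hR1 : ∀ k, Integrable (fun ω => R ω k) μ)
    (hR2 : ∀ k k', Integrable (fun ω => R ω k * R ω k') μ)
    (hθ1 : ∀ k l, Integrable (fun ω => θ ω k l) μ)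
    (hθ2 : ∀ k l k' l', Integrable (fun ω => θ ω k l * θ ω k' l') μ)
    (w_b : Fin K → ℝ) (z : Fin L → ℝ)
    (μv : Fin K → ℝ) (hμv : ∀ k, μv k = ∫ ω, R ω k ∂μ)
    (m : Matrix (Fin K) (Fin L) ℝ) (hm : ∀ k l, m k l = ∫ ω, θ ω k l ∂μ)
    (Sig : Matrix (Fin L) (Fin L) ℝ) (hSig : Sig.PosSemidef)
    (CovTilt : Matrix (Fin K) (Fin K) ℝ)
    (hCovTilt : ∀ k k', CovTilt k k' =
      ∫ ω, ((θ ω - m) *ᵥ z) k * ((θ ω - m) *ᵥ z) k' ∂μ)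
    (hiso : CovTilt = (z ⬝ᵥ (Sig *ᵥ z)) • (1 : Matrix (Fin K) (Fin K) ℝ)) :
    (∫ ω, variance (fun ω' => (w_b + θ ω *ᵥ z) ⬝ᵥ R ω') μ ∂μ)
      ≤ variance (fun ω => (w_b + θ ω *ᵥ z) ⬝ᵥ R ω) μ ∧
    ((∫ ω, variance (fun ω' => (w_b + θ ω *ᵥ z) ⬝ᵥ R ω') μ ∂μ)
      < variance (fun ω => (w_b + θ ω *ᵥ z) ⬝ᵥ R ω) μ
      ↔ 0 < (z ⬝ᵥ (Sig *ᵥ z)) * ∑ k, (μv k)^2) := by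
  classical
  set c : ℝ := z ⬝ᵥ (Sig *ᵥ z) with hc_def
  set T : ℝ := ∑ k, (μv k)^2 with hT_def
  -- weights as (opaque) scalar processes
  obtain ⟨W, hW⟩ : ∃ W : Fin K → Ω → ℝ, ∀ k ω, W k ω = w_b k + ∑ l, θ ω k l * z l :=
    ⟨_, fun k ω => rfl⟩
  have hWk_eq : ∀ ω k, (w_b + θ ω *ᵥ z) k = W k ω := by
    intro ω k; rw [hW k ω]; simp [mulVec, dotProduct]
  have hdot : ∀ ω ω', (w_b + θ ω *ᵥ z) ⬝ᵥ R ω' = ∑ k, W k ω * R ω' k := by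
    intro ω ω'; simp only [dotProduct]; exact Finset.sum_congr rfl fun k _ => by rw [hWk_eq]
  -- L² facts
  have hθL2 : ∀ k l, MemLp (fun ω => θ ω k l) 2 μ := fun k l =>
    (memLp_two_iff_integrable_sq (hθ1 k l).aestronglyMeasurable).2
      (by simpa [pow_two] using hθ2 k l k l)
  have hRL2 : ∀ k, MemLp (fun ω => R ω k) 2 μ := fun k =>
    (memLp_two_iff_integrable_sq (hR1 k).aestronglyMeasurable).2
      (by simpa [pow_two] using hR2 k k)
  have hWL2 : ∀ k, MemLp (W k) 2 μ := by
    intro k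
    have h1 : MemLp (fun ω => ∑ l, θ ω k l * z l) 2 μ := by
      refine memLp_finset_sum _ (fun l _ => ?_)
      simpa [mul_comm] using (hθL2 k l).const_mul (z l)
    have h2 : MemLp (fun ω => w_b k + ∑ l, θ ω k l * z l) 2 μ :=
      (memLp_const (w_b k)).add h1
    exact h2.ae_eq (Filter.Eventually.of_forall fun ω => (hW k ω).symm)
  have hWk_int : ∀ k, Integrable (W k) μ := fun k => (hWL2 k).integrable one_le_two
  have hWW : ∀ k k', Integrable (fun ω => W k ω * W k' ω) μ := fun k k' =>
    l2_mul_integrable' (hWL2 k) (hWL2 k')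
  -- independence transfers
  have hpm : ∀ (k : Fin K) (l : Fin L), Measurable fun M : Fin K → Fin L → ℝ => M k l :=
    fun k l => (measurable_pi_apply l).comp (measurable_pi_apply k)
  have hφm : ∀ k : Fin K, Measurable (fun M : Fin K → Fin L → ℝ => w_b k + ∑ l, M k l * z l) :=
    fun k => measurable_const.add (Finset.measurable_sum _ fun l _ => (hpm k l).mul_const (z l))
  have hI1 : ∀ k, IndepFun (W k) (fun ω => R ω k) μ := by
    intro k
    have h := hindep.comp (hφm k) (measurable_pi_apply k)
    exact h.congr (Filter.Eventually.of_forall fun ω => (hW k ω).symm)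
      (Filter.Eventually.of_forall fun ω => rfl)
  have hIw : ∀ k k', IndepFun (fun ω => W k ω * W k' ω) (fun ω => R ω k * R ω k') μ := by
    intro k k'
    have h := hindep.comp ((hφm k).mul (hφm k'))
      ((measurable_pi_apply k).mul (measurable_pi_apply k'))
    refine h.congr (Filter.Eventually.of_forall fun ω => ?_)
      (Filter.Eventually.of_forall fun ω => rfl)
    simp only [Function.comp_apply, Pi.mul_apply]
    rw [hW k ω, hW k' ω]
    rfl
  -- moment notations
  obtain ⟨A, hA⟩ : ∃ A : Fin K → ℝ, ∀ k, A k = ∫ ω, W k ω ∂μ := ⟨_, fun k => rfl⟩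
  obtain ⟨B, hB⟩ : ∃ B : Fin K → Fin K → ℝ, ∀ k k', B k k' = ∫ ω, W k ω * W k' ω ∂μ :=
    ⟨_, fun k k' => rfl⟩
  obtain ⟨S, hS⟩ : ∃ S : Fin K → Fin K → ℝ, ∀ k k', S k k' = ∫ ω, R ω k * R ω k' ∂μ :=
    ⟨_, fun k k' => rfl⟩
  -- integrability of the portfolio return and its square
  have hTk_int : ∀ k, Integrable (fun ω => W k ω * R ω k) μ := fun k =>
    (hI1 k).integrable_mul (hWk_int k) (hR1 k)
  have hWWRR_int : ∀ k k', Integrable (fun ω => (W k ω * W k' ω) * (R ω k * R ω k')) μ :=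
    fun k k' => (hIw k k').integrable_mul (hWW k k') (hR2 k k')
  have hTkk_int : ∀ k k',
      Integrable (fun ω => (W k ω * R ω k) * (W k' ω * R ω k')) μ := by
    intro k k'
    refine (hWWRR_int k k').congr (Filter.Eventually.of_forall fun ω => ?_)
    ring
  have hXL2 : MemLp (fun ω => ∑ k, W k ω * R ω k) 2 μ := by
    refine memLp_finset_sum _ (fun k _ => ?_)
    have haesm : AEStronglyMeasurable (fun ω => W k ω * R ω k) μ :=
      (hWk_int k).aestronglyMeasurable.mul (hR1 k).aestronglyMeasurable
    refine (memLp_two_iff_integrable_sq haesm).2 ?_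
    refine (hTkk_int k k).congr (Filter.Eventually.of_forall fun ω => ?_)
    ring
  -- first moment of X
  have hEX : (∫ ω, ∑ k, W k ω * R ω k ∂μ) = ∑ k, A k * μv k := by
    rw [integral_finset_sum _ (fun k _ => hTk_int k)]
    refine Finset.sum_congr rfl fun k _ => ?_
    rw [hA k, hμv k]
    exact (hI1 k).integral_mul_eq_mul_integral (hWk_int k).aestronglyMeasurable (hR1 k).aestronglyMeasurable
  -- second moment of X
  have hEX2 : (∫ ω, (∑ k, W k ω * R ω k)^2 ∂μ) = ∑ k, ∑ k', B k k' * S k k' := by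
    have hptw : ∀ ω, (∑ k, W k ω * R ω k)^2
        = ∑ k, ∑ k', (W k ω * W k' ω) * (R ω k * R ω k') := by
      intro ω
      rw [sq, Finset.sum_mul_sum]
      exact Finset.sum_congr rfl fun k _ => Finset.sum_congr rfl fun k' _ => by ring
    simp only [hptw]
    rw [integral_finset_sum _ (fun k _ => integrable_finset_sum _ fun k' _ => hWWRR_int k k')]
    refine Finset.sum_congr rfl fun k _ => ?_
    rw [integral_finset_sum _ (fun k' _ => hWWRR_int k k')]
    refine Finset.sum_congr rfl fun k' _ => ?_
    rw [hB k k', hS k k']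
    exact (hIw k k').integral_mul_eq_mul_integral (hWW k k').aestronglyMeasurable (hR2 k k').aestronglyMeasurable
  -- conditional variance formula
  have hcond : ∀ ω, variance (fun ω' => (w_b + θ ω *ᵥ z) ⬝ᵥ R ω') μ
      = ∑ k, ∑ k', (W k ω * W k' ω) * (S k k' - μv k * μv k') := by
    intro ω
    have hvL2 : MemLp (fun ω' => ∑ k, W k ω * R ω' k) 2 μ :=
      memLp_finset_sum _ (fun k _ => (hRL2 k).const_mul (W k ω))
    have h1 : variance (fun ω' => (w_b + θ ω *ᵥ z) ⬝ᵥ R ω') μ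
        = variance (fun ω' => ∑ k, W k ω * R ω' k) μ := by
      congr 1; funext ω'; exact hdot ω ω'
    rw [h1, variance_eq_sub hvL2]
    simp only [Pi.pow_apply]
    have h2 : (∫ ω', (∑ k, W k ω * R ω' k) ^ 2 ∂μ)
        = ∑ k, ∑ k', (W k ω * W k' ω) * S k k' := by
      have hptw : ∀ ω', (∑ k, W k ω * R ω' k)^2
          = ∑ k, ∑ k', (W k ω * W k' ω) * (R ω' k * R ω' k') := by
        intro ω'
        rw [sq, Finset.sum_mul_sum]
        exact Finset.sum_congr rfl fun k _ => Finset.sum_congr rfl fun k' _ => by ring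
      simp only [hptw]
      rw [integral_finset_sum _ (fun k _ => integrable_finset_sum _ fun k' _ =>
        (hR2 k k').const_mul _)]
      refine Finset.sum_congr rfl fun k _ => ?_
      rw [integral_finset_sum _ (fun k' _ => (hR2 k k').const_mul _)]
      refine Finset.sum_congr rfl fun k' _ => ?_
      rw [hS k k']
      exact integral_const_mul _ _
    have h3 : (∫ ω', ∑ k, W k ω * R ω' k ∂μ) = ∑ k, W k ω * μv k := by
      rw [integral_finset_sum _ (fun k _ => (hR1 k).const_mul _)]
      refine Finset.sum_congr rfl fun k _ => ?_
      rw [integral_const_mul, hμv k]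
    rw [h2, h3, sq, Finset.sum_mul_sum, ← Finset.sum_sub_distrib]
    refine Finset.sum_congr rfl fun k _ => ?_
    rw [← Finset.sum_sub_distrib]
    refine Finset.sum_congr rfl fun k' _ => ?_
    ring
  -- expected conditional variance
  have hEcond : (∫ ω, variance (fun ω' => (w_b + θ ω *ᵥ z) ⬝ᵥ R ω') μ ∂μ)
      = ∑ k, ∑ k', B k k' * (S k k' - μv k * μv k') := by
    simp only [hcond]
    rw [integral_finset_sum _ (fun k _ => integrable_finset_sum _ fun k' _ =>
      (hWW k k').mul_const _)]
    refine Finset.sum_congr rfl fun k _ => ?_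
    rw [integral_finset_sum _ (fun k' _ => (hWW k k').mul_const _)]
    refine Finset.sum_congr rfl fun k' _ => ?_
    rw [hB k k']
    exact integral_mul_const _ _
  -- total variance
  have hVar : variance (fun ω => (w_b + θ ω *ᵥ z) ⬝ᵥ R ω) μ
      = ∑ k, ∑ k', B k k' * S k k' - (∑ k, A k * μv k)^2 := by
    have h1 : variance (fun ω => (w_b + θ ω *ᵥ z) ⬝ᵥ R ω) μ
        = variance (fun ω => ∑ k, W k ω * R ω k) μ := by
      congr 1; funext ω; exact hdot ω ω
    rw [h1, variance_eq_sub hXL2]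
    simp only [Pi.pow_apply]
    rw [hEX2, hEX]
  -- the mean of W
  have hAval : ∀ k, A k = w_b k + ∑ l, m k l * z l := by
    intro k
    rw [hA k]
    have h0 : ∀ ω, W k ω = w_b k + ∑ l, θ ω k l * z l := hW k
    calc (∫ ω, W k ω ∂μ) = ∫ ω, (w_b k + ∑ l, θ ω k l * z l) ∂μ := by simp only [h0]
    _ = w_b k + ∑ l, m k l * z l := by
        rw [integral_add (integrable_const _)
          (integrable_finset_sum _ fun l _ => (hθ1 k l).mul_const _),
          integral_const, probReal_univ, smul_eq_mul, one_mul,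
          integral_finset_sum _ (fun l _ => (hθ1 k l).mul_const _)]
        congr 1
        exact Finset.sum_congr rfl fun l _ => by rw [integral_mul_const, ← hm]
  -- CovTilt identity
  have hBA : ∀ k k', B k k' - A k * A k' = CovTilt k k' := by
    intro k k'
    have hWc : ∀ ω (j : Fin K), ((θ ω - m) *ᵥ z) j = W j ω - A j := by
      intro ω j
      rw [hAval j, hW j ω]
      simp [mulVec, dotProduct, Matrix.sub_apply, sub_mul, Finset.sum_sub_distrib]
    rw [hCovTilt k k']
    have hptw : ∀ ω, ((θ ω - m) *ᵥ z) k * ((θ ω - m) *ᵥ z) k'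
        = W k ω * W k' ω - (A k' * W k ω + A k * W k' ω - A k * A k') := by
      intro ω; rw [hWc ω k, hWc ω k']; ring
    simp only [hptw]
    have hi1 : Integrable (fun ω => A k' * W k ω) μ := (hWk_int k).const_mul _
    have hi2 : Integrable (fun ω => A k * W k' ω) μ := (hWk_int k').const_mul _
    have hi3 : Integrable (fun ω => A k' * W k ω + A k * W k' ω) μ := hi1.add hi2
    have hi4 : Integrable (fun ω => A k' * W k ω + A k * W k' ω - A k * A k') μ :=
      hi3.sub (integrable_const _)
    rw [integral_sub (hWW k k') hi4, integral_sub hi3 (integrable_const _),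
      integral_add hi1 hi2,
      integral_const_mul, integral_const_mul, integral_const, probReal_univ,
      smul_eq_mul, one_mul]
    rw [hB k k', ← hA k, ← hA k']
    ring
  -- isotropy
  have hCT : ∀ k k', CovTilt k k' = c * (if k = k' then 1 else 0) := by
    intro k k'
    rw [hiso]
    by_cases h : k = k' <;> simp [Matrix.smul_apply, Matrix.one_apply, h]
  -- the key decomposition
  have hkey : variance (fun ω => (w_b + θ ω *ᵥ z) ⬝ᵥ R ω) μ
      = (∫ ω, variance (fun ω' => (w_b + θ ω *ᵥ z) ⬝ᵥ R ω') μ ∂μ) + c * T := by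
    rw [hVar, hEcond]
    have hsq : (∑ k, A k * μv k)^2 = ∑ k, ∑ k', (A k * A k') * (μv k * μv k') := by
      rw [sq, Finset.sum_mul_sum]
      exact Finset.sum_congr rfl fun k _ => Finset.sum_congr rfl fun k' _ => by ring
    have hcT : c * T = ∑ k, ∑ k', CovTilt k k' * (μv k * μv k') := by
      rw [hT_def, Finset.mul_sum]
      refine Finset.sum_congr rfl fun k _ => ?_
      rw [Finset.sum_eq_single k]
      · rw [hCT k k]; simp [sq]
      · intro k' _ hk'; rw [hCT k k']; simp [Ne.symm hk']
      · intro h; exact absurd (Finset.mem_univ k) h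
    rw [hsq, hcT, ← Finset.sum_add_distrib, ← Finset.sum_sub_distrib]
    refine Finset.sum_congr rfl fun k _ => ?_
    rw [← Finset.sum_add_distrib, ← Finset.sum_sub_distrib]
    refine Finset.sum_congr rfl fun k' _ => ?_
    rw [← hBA k k']
    ring
  -- nonnegativity
  have hc0 : 0 ≤ c := by
    have h := hSig.dotProduct_mulVec_nonneg z
    simpa [hc_def] using h
  have hT0 : 0 ≤ T := Finset.sum_nonneg fun k _ => sq_nonneg _
  have hcT0 : 0 ≤ c * T := mul_nonneg hc0 hT0
  refine ⟨by linarith, ?_, ?_⟩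
  · intro h; linarith
  · intro h; linarith
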